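/- If w is a C^2 solution on an interval (θ,1) of the ODE -(p-1)|w'|^{p-2}w'' - ((N-1)/r)|w'|^{p-2}w' - |w'|^q = 0 with w' < 0 on (θ,1), then there is a constant γ ∈ ℝ such that r^{β-1} χ(w'(r)) + r^β/β = γ for all r ∈ (θ,1), where χ(z) := ((p-1)/(p-1-q)) |z|^{p-2-q} z. -/

import Mathlib

open Real Set

/-- First integral of the stationary ODE: if `w` is `C²` on `(θ,1)` with
`w' < 0` solving `-(p-1)|w'|^{p-2}w'' - ((N-1)/r)|w'|^{p-2}w' - |w'|^q = 0`,
then `r^{β-1} χ(w'(r)) + r^β/β` is constant on `(θ,1)`, where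
`χ(z) = ((p-1)/(p-1-q)) sign(z) |z|^{p-1-q}`. -/
theorem first_integral_of_ODE (N : ℕ) (p q : ℝ) (hN : 2 ≤ N) (hp : 2 ≤ p)
    (hq0 : 0 < q) (hq : q < p - 1)
    (β : ℝ) (hβ : β = 1 + ((N : ℝ) - 1) * (p - 1 - q) / (p - 1))
    (χ : ℝ → ℝ)
    (hχ : ∀ z : ℝ, χ z = ((p - 1) / (p - 1 - q)) * Real.sign z * |z| ^ (p - 1 - q))
    (θ : ℝ) (hθ : θ ∈ Ico (0 : ℝ) 1)
    (w w' w'' : ℝ → ℝ)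
    (hd1 : ∀ r ∈ Ioo θ 1, HasDerivAt w (w' r) r)
    (hd2 : ∀ r ∈ Ioo θ 1, HasDerivAt w' (w'' r) r)
    (hcont : ContinuousOn w'' (Ioo θ 1))
    (hneg : ∀ r ∈ Ioo θ 1, w' r < 0)
    (hode : ∀ r ∈ Ioo θ 1,
      -(p - 1) * |w' r| ^ (p - 2) * w'' r
        - (((N : ℝ) - 1) / r) * |w' r| ^ (p - 2) * w' r - |w' r| ^ q = 0) :
    ∃ γ : ℝ, ∀ r ∈ Ioo θ 1, r ^ (β - 1) * χ (w' r) + r ^ β / β = γ := by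
  have hp1 : (0:ℝ) < p - 1 := by linarith
  have hpq : (0:ℝ) < p - 1 - q := by linarith
  set c : ℝ := (p - 1) / (p - 1 - q) with hc
  have hcc : c * (p - 1 - q) = p - 1 := by
    rw [hc]; field_simp
  have hβc : (β - 1) * c = (N : ℝ) - 1 := by
    rw [hβ, hc]; field_simp; ring
  set F : ℝ → ℝ := fun x => x ^ (β - 1) * χ (w' x) + x ^ β / β with hF
  -- F has zero derivative on (θ,1)
  have key : ∀ r ∈ Ioo θ 1, HasDerivAt F 0 r := by
    intro r hr
    have hr0 : 0 < r := lt_of_le_of_lt hθ.1 hr.1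
    have hv : 0 < -(w' r) := by linarith [hneg r hr]
    have h1 : HasDerivAt (fun x : ℝ => x ^ (β - 1)) ((β - 1) * r ^ (β - 1 - 1)) r :=
      Real.hasDerivAt_rpow_const (Or.inl hr0.ne')
    have h2 : HasDerivAt (fun x => -(w' x)) (-(w'' r)) r := (hd2 r hr).neg
    have h3 : HasDerivAt (fun x => (-(w' x)) ^ (p - 1 - q))
        (-(w'' r) * (p - 1 - q) * (-(w' r)) ^ (p - 1 - q - 1)) r :=
      h2.rpow_const (Or.inl hv.ne')
    have h4 : HasDerivAt
        (fun x : ℝ => x ^ (β - 1) * (-c * (-(w' x)) ^ (p - 1 - q)) + x ^ β / β)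
        ((β - 1) * r ^ (β - 1 - 1) * (-c * (-(w' r)) ^ (p - 1 - q))
          + r ^ (β - 1) * (-c * (-(w'' r) * (p - 1 - q) * (-(w' r)) ^ (p - 1 - q - 1)))
          + β * r ^ (β - 1) / β) r :=
      (h1.mul (h3.const_mul (-c))).add
        ((Real.hasDerivAt_rpow_const (x := r) (p := β) (Or.inl hr0.ne')).div_const β)
    have hFG : F =ᶠ[nhds r]
        (fun x : ℝ => x ^ (β - 1) * (-c * (-(w' x)) ^ (p - 1 - q)) + x ^ β / β) := by
      have hev1 : ∀ᶠ x in nhds r, w' x < 0 :=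
        (hd2 r hr).continuousAt.eventually_lt continuousAt_const (hneg r hr)
      filter_upwards [hev1] with x hx
      simp only [hF, hχ, Real.sign_of_neg hx, abs_of_neg hx]
      ring
    have hd : HasDerivAt F
        ((β - 1) * r ^ (β - 1 - 1) * (-c * (-(w' r)) ^ (p - 1 - q))
          + r ^ (β - 1) * (-c * (-(w'' r) * (p - 1 - q) * (-(w' r)) ^ (p - 1 - q - 1)))
          + β * r ^ (β - 1) / β) r := h4.congr_of_eventuallyEq hFG
    convert hd using 1
    -- show the derivative expression is zero
    have hβ0 : β ≠ 0 := by
      have hN2 : (2:ℝ) ≤ (N:ℝ) := by exact_mod_cast hN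
      have h0 : (0:ℝ) ≤ ((N:ℝ) - 1) * (p - 1 - q) / (p - 1) :=
        div_nonneg (mul_nonneg (by linarith) hpq.le) hp1.le
      rw [hβ]; positivity
    rw [mul_comm β, mul_div_assoc, div_self hβ0, mul_one]
    have hode' := hode r hr
    rw [abs_of_neg (hneg r hr)] at hode'
    have key0 : (((N:ℝ) - 1) / r) * ((-w' r) ^ (p - 2)) * (w' r) * r
        = ((N:ℝ) - 1) * ((-w' r) ^ (p - 2)) * (w' r) := by
      field_simp
    have hode2 : -(p - 1) * ((-w' r) ^ (p - 2)) * w'' r * r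
        + ((N:ℝ) - 1) * ((-w' r) ^ (p - 2)) * (-(w' r)) - ((-w' r) ^ q) * r = 0 := by
      have h2 := congrArg (fun z => z * r) hode'
      simp only [zero_mul] at h2
      linear_combination h2 + key0
    have e1 : (-(w' r)) ^ (p - 1 - q - 1) * (-(w' r)) ^ q = (-(w' r)) ^ (p - 2) := by
      rw [← Real.rpow_add hv]; congr 1; ring
    have e2 : (-(w' r)) ^ (p - 1 - q) * (-(w' r)) ^ q = (-(w' r)) ^ (p - 2) * (-(w' r)) := by
      have h : (-(w' r)) ^ (p - 2) * (-(w' r)) = (-(w' r)) ^ (p - 2) * (-(w' r)) ^ (1:ℝ) := by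
        rw [Real.rpow_one]
      rw [h, ← Real.rpow_add hv, ← Real.rpow_add hv]; congr 1; ring
    have e3 : r ^ (β - 1) = r ^ (β - 1 - 1) * r := by
      have h : r ^ (β - 1 - 1) * r = r ^ (β - 1 - 1) * r ^ (1:ℝ) := by rw [Real.rpow_one]
      rw [h, ← Real.rpow_add hr0]; congr 1; ring
    have hs : ((-(w' r)) ^ q) ≠ 0 := (Real.rpow_pos_of_pos hv q).ne'
    have hfin : ((β - 1) * r ^ (β - 1 - 1) * (-c * (-w' r) ^ (p - 1 - q))
          + r ^ (β - 1) * (-c * (-w'' r * (p - 1 - q) * (-w' r) ^ (p - 1 - q - 1)))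
          + r ^ (β - 1)) * ((-(w' r)) ^ q * r) = 0 := by
      linear_combination
        (-(r ^ (β - 1))) * hode2
        + (r ^ (β - 1) * w'' r * c * (p - 1 - q) * r) * e1
        + (-((β - 1) * r ^ (β - 1 - 1) * c * r)) * e2
        + (((N:ℝ) - 1) * (-w' r) ^ (p - 2) * (-(w' r))) * e3
        + (r ^ (β - 1) * (-w' r) ^ (p - 2) * w'' r * r) * hcc
        + (-(r ^ (β - 1 - 1) * (-w' r) ^ (p - 2) * (-(w' r)) * r)) * hβc
    have hsr : (-(w' r)) ^ q * r ≠ 0 := mul_ne_zero hs hr0.ne'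
    exact ((mul_eq_zero.mp hfin).resolve_right hsr).symm
  -- conclude F is constant
  set r₀ : ℝ := (θ + 1) / 2 with hr₀
  have hr₀mem : r₀ ∈ Ioo θ 1 := ⟨by rw [hr₀]; linarith [hθ.2], by rw [hr₀]; linarith [hθ.2]⟩
  refine ⟨F r₀, fun r hr => ?_⟩
  have const_on : ∀ a b : ℝ, a ∈ Ioo θ 1 → b ∈ Ioo θ 1 → a ≤ b → F b = F a := by
    intro a b ha hb hab
    have hsub : Icc a b ⊆ Ioo θ 1 := fun x hx =>
      ⟨lt_of_lt_of_le ha.1 hx.1, lt_of_le_of_lt hx.2 hb.2⟩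
    have hcontF : ContinuousOn F (Icc a b) := fun x hx =>
      ((key x (hsub hx)).continuousAt).continuousWithinAt
    have hderiv : ∀ x ∈ Ico a b, HasDerivWithinAt F 0 (Ici x) x := fun x hx =>
      (key x (hsub ⟨hx.1, hx.2.le⟩)).hasDerivWithinAt
    exact constant_of_has_deriv_right_zero hcontF hderiv b ⟨hab, le_refl b⟩
  rcases le_total r r₀ with h | h
  · exact (const_on r r₀ hr hr₀mem h).symm
  · exact const_on r₀ r hr₀mem hr h
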